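/- Let (X, A) be a pair of random variables where X takes values in {0,1} with P[X=0] = P[X=1] = 1/2 and A takes values in ℕ, and suppose that P[A=a | X=0] > 0 for every a ∈ ℕ with P[A=a] > 0. Then I(X;A) ≤ ∑_{a ∈ ℕ} P[A=a] · (1 − P[A=a | X=1]/P[A=a | X=0])², where the sum ranges over all a with P[A=a] > 0. -/

import Mathlib

lemma key_nats (p q : ℝ) (hp : 0 < p) (hq : 0 ≤ q) :
    p * Real.log (2*p/(p+q)) + q * Real.log (2*q/(p+q))
      ≤ Real.log 2 * ((p+q) * ((p-q)/p)^2) := by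
  have hs : 0 < p + q := by linarith
  have hl2 : (0.6931471803:ℝ) < Real.log 2 := Real.log_two_gt_d9
  have hl2' : (0:ℝ) < Real.log 2 := by linarith
  have hp2 : (0:ℝ) < p^2 := by positivity
  rcases le_or_gt (p^2) (Real.log 2 * (p+q)^2) with hcase | hcase
  · have h1 : p * Real.log (2*p/(p+q)) ≤ p * (2*p/(p+q) - 1) :=
      mul_le_mul_of_nonneg_left (Real.log_le_sub_one_of_pos (by positivity)) hp.le
    have h2 : q * Real.log (2*q/(p+q)) ≤ q * (2*q/(p+q) - 1) := by
      rcases eq_or_lt_of_le hq with h | h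
      · simp [← h]
      · exact mul_le_mul_of_nonneg_left (Real.log_le_sub_one_of_pos (by positivity)) hq
    have hid : p * (2*p/(p+q) - 1) + q * (2*q/(p+q) - 1) = (p-q)^2/(p+q) := by
      field_simp; ring
    have h3 : (p-q)^2/(p+q) ≤ Real.log 2 * ((p+q) * ((p-q)/p)^2) := by
      rw [div_pow, show Real.log 2 * ((p+q) * ((p-q)^2/p^2))
          = (Real.log 2 * (p+q) * (p-q)^2) / p^2 by ring,
        div_le_div_iff₀ hs hp2]
      nlinarith [sq_nonneg (p-q), mul_nonneg (mul_nonneg hl2'.le hs.le) (sq_nonneg (p-q))]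
    linarith
  · rcases eq_or_lt_of_le hq with h | hq'
    · have hq0 : q = 0 := h.symm
      subst hq0
      rw [show 2*p/(p+0) = 2 by rw [add_zero]; field_simp, show ((p-0)/p)^2 = 1 by rw [sub_zero]; field_simp]
      simp
      ring_nf
      rfl
    · have hq17 : q < 0.17 * (p + q) := by nlinarith
      set Lp := Real.log ((p+q)/p) with hLp
      set Lq := Real.log ((p+q)/q) with hLq
      have e1 : Real.log (2*p/(p+q)) = Real.log 2 - Lp := by
        rw [hLp, Real.log_div hs.ne' hp.ne',
          Real.log_div (by positivity : (0:ℝ) < 2*p).ne' hs.ne',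
          Real.log_mul two_ne_zero hp.ne']
        ring
      have e2 : Real.log (2*q/(p+q)) = Real.log 2 - Lq := by
        rw [hLq, Real.log_div hs.ne' hq'.ne',
          Real.log_div (by positivity : (0:ℝ) < 2*q).ne' hs.ne',
          Real.log_mul two_ne_zero hq'.ne']
        ring
      have f1 : q ≤ (p+q) * Lp := by
        have h0 := Real.one_sub_inv_le_log_of_pos (show (0:ℝ) < (p+q)/p by positivity)
        rw [inv_div, ← hLp] at h0
        have h' : 1 - p/(p+q) = q/(p+q) := by field_simp; ring
        rw [h'] at h0
        calc q = (p+q) * (q/(p+q)) := by field_simp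
        _ ≤ (p+q) * Lp := mul_le_mul_of_nonneg_left h0 hs.le
      have f2 : 1 ≤ Lq := by
        rw [hLq, Real.le_log_iff_exp_le (by positivity), le_div_iff₀ hq']
        nlinarith [Real.exp_one_lt_d9]
      rw [e1, e2, div_pow, show Real.log 2 * ((p+q) * ((p-q)^2/p^2))
          = (Real.log 2 * (p+q) * (p-q)^2) / p^2 by ring, le_div_iff₀ hp2]
      have h4 : Real.log 2 * (p+q)^2 * (q*(2*p-q)) ≤ p^2 * (q*(2*p-q)) := by
        nlinarith [mul_nonneg hq (by nlinarith : (0:ℝ) ≤ 2*p - q)]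
      have h5 : p^3 * q ≤ p^3 * ((p+q) * Lp) :=
        mul_le_mul_of_nonneg_left f1 (by positivity)
      have h6 : (p+q)*q*p^2 ≤ (p+q)*q*p^2*Lq := by
        nlinarith [mul_pos (mul_pos hs hq') hp2]
      have hfin : (p+q) * ((p * (Real.log 2 - Lp) + q * (Real.log 2 - Lq)) * p^2)
          ≤ (p+q) * (Real.log 2 * (p+q) * (p-q)^2) := by
        nlinarith [h4, h5, h6, sq_nonneg (p*q)]
      exact le_of_mul_le_mul_left hfin hs

lemma key_nonneg (p q : ℝ) (hp : 0 < p) (hq : 0 ≤ q) :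
    0 ≤ p * Real.log (2*p/(p+q)) + q * Real.log (2*q/(p+q)) := by
  have hs : 0 < p + q := by linarith
  rcases eq_or_lt_of_le hq with h | hq'
  · have hq0 : q = 0 := h.symm
    subst hq0
    rw [show 2*p/(p+0) = 2 by rw [add_zero]; field_simp]
    simp
    positivity
  · have h1 := Real.one_sub_inv_le_log_of_pos (show (0:ℝ) < 2*p/(p+q) by positivity)
    have h2 := Real.one_sub_inv_le_log_of_pos (show (0:ℝ) < 2*q/(p+q) by positivity)
    rw [inv_div] at h1 h2
    have e1 : p * (1 - (p+q)/(2*p)) = p - (p+q)/2 := by field_simp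
    have e2 : q * (1 - (p+q)/(2*q)) = q - (p+q)/2 := by field_simp
    nlinarith [mul_le_mul_of_nonneg_left h1 hp.le, mul_le_mul_of_nonneg_left h2 hq'.le]



/-- Mutual information (in bits) of a joint distribution `mu` of a pair `(X, A)` with values
in `{0,1} × ℕ`; terms where the joint probability is `0` contribute `0`
(automatic since `0 * log 0 = 0`). -/
noncomputable def mutualInfoBoolNat (mu : Bool × ℕ → ℝ) : ℝ :=
  ∑' z : Bool × ℕ,
    mu z * Real.logb 2 (mu z / ((∑' a : ℕ, mu (z.1, a)) * (mu (false, z.2) + mu (true, z.2))))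

theorem stmt8 (mu : Bool × ℕ → ℝ) (hpos : ∀ z, 0 ≤ mu z) (hsum : HasSum mu 1)
    (hunif : ∀ b : Bool, ∑' a : ℕ, mu (b, a) = 1/2)
    (hcond : ∀ a : ℕ, 0 < mu (false, a) + mu (true, a) → 0 < mu (false, a)) :
    ENNReal.ofReal (mutualInfoBoolNat mu)
      ≤ ∑' a : ℕ, ENNReal.ofReal
          ((mu (false, a) + mu (true, a)) *
            (1 - (mu (true, a) / (∑' a' : ℕ, mu (true, a')))
                  / (mu (false, a) / (∑' a' : ℕ, mu (false, a')))) ^ 2) := by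
  have hl2' : (0:ℝ) < Real.log 2 := Real.log_pos (by norm_num)
  set g : Bool × ℕ → ℝ := fun z =>
    mu z * Real.logb 2 (mu z / (1/2 * (mu (false, z.2) + mu (true, z.2)))) with hg
  have hgdef : mutualInfoBoolNat mu = ∑' z, g z := by
    rw [mutualInfoBoolNat]
    congr 1
    funext z
    rw [hunif z.1]
  simp only [hunif]
  -- per-a bounds
  have key : ∀ a : ℕ, 0 ≤ g (false, a) + g (true, a) ∧
      g (false, a) + g (true, a) ≤ (mu (false, a) + mu (true, a)) *
        (1 - (mu (true, a) / (1/2)) / (mu (false, a) / (1/2))) ^ 2 := by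
    intro a
    set p := mu (false, a) with hpd
    set q := mu (true, a) with hqd
    have hq : 0 ≤ q := hpos _
    by_cases hspos : 0 < p + q
    · have hp : 0 < p := hcond a hspos
      have harg : ∀ x : ℝ, x / (1/2 * (p+q)) = 2*x/(p+q) := by
        intro x
        rw [div_eq_div_iff (by positivity) (by positivity)]
        ring
      have hbits : g (false, a) + g (true, a) =
          (p * Real.log (2*p/(p+q)) + q * Real.log (2*q/(p+q))) / Real.log 2 := by
        simp only [hg]
        rw [harg p, harg q, ← Real.log_div_log, ← Real.log_div_log]
        ring
      have hrat : (q / (1/2)) / (p / (1/2)) = q / p := by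
        rw [show q / (1/2) = 2*q by ring, show p / (1/2) = 2*p by ring,
          mul_div_mul_left q p two_ne_zero]
      have hsub : (1 : ℝ) - q/p = (p-q)/p := by
        rw [sub_div, div_self hp.ne']
      constructor
      · rw [hbits]
        exact div_nonneg (key_nonneg p q hp hq) hl2'.le
      · rw [hbits, hrat, hsub, div_le_iff₀ hl2', mul_comm _ (Real.log 2)]
        exact key_nats p q hp hq
    · have hp0 : p = 0 := le_antisymm (by push_neg at hspos; linarith [hpos (true, a)]) (hpos _)
      have hq0 : q = 0 := le_antisymm (by push_neg at hspos; linarith [hpos (false, a)]) hq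
      constructor
      · simp only [hg, ← hpd, ← hqd, hp0, hq0]
        norm_num
      · simp only [hg, ← hpd, ← hqd, hp0, hq0]
        norm_num
  by_cases hsg : Summable g
  · have hfact : ∀ b, Summable fun a => g (b, a) := fun b => hsg.prod_factor b
    have hfs : Summable (fun a => g (false, a) + g (true, a)) := (hfact false).add (hfact true)
    have h1 : mutualInfoBoolNat mu = ∑' a, (g (false, a) + g (true, a)) := by
      rw [hgdef, Summable.tsum_prod hsg, tsum_bool, ← Summable.tsum_add (hfact false) (hfact true)]
    rw [h1, ENNReal.ofReal_tsum_of_nonneg (fun a => (key a).1) hfs]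
    exact ENNReal.tsum_le_tsum fun a => ENNReal.ofReal_le_ofReal (key a).2
  · rw [hgdef, tsum_eq_zero_of_not_summable hsg]
    simp
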